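/- The map sending a linear K[z]-automorphism of K⟨x₁,…,x_n,z⟩ to its Jacobian matrix is a group isomorphism from the group of linear K[z]-automorphisms onto GLₙ(K[z₁,z₂]). -/

import Mathlib

open FreeAlgebra

/-- `sandwich n p w` : for `p = Σ c_{ab} z₁^a z₂^b ∈ K[z₁,z₂]` and
`w ∈ F = K⟨x₁,…,x_n,z⟩` (with `z = ι (Fin.last n)`), the element `Σ c_{ab} z^a · w · z^b`. -/
noncomputable def sandwich (K : Type*) [Field K] (n : ℕ) (p : MvPolynomial (Fin 2) K)
    (w : FreeAlgebra K (Fin (n + 1))) : FreeAlgebra K (Fin (n + 1)) :=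
  (AddMonoidAlgebra.coeff p).sum fun m c => c • (ι K (Fin.last n) ^ m 0 * w * ι K (Fin.last n) ^ m 1)

/-- The linear `K[z]`-endomorphism of `K⟨x₁,…,x_n,z⟩` with Jacobian matrix `A`:
it fixes `z = ι (Fin.last n)` and sends `x_j = ι j.castSucc` to
`Σ_i sandwich (A i j) x_i`. -/
noncomputable def linearKzEndo (K : Type*) [Field K] (n : ℕ)
    (A : Matrix (Fin n) (Fin n) (MvPolynomial (Fin 2) K)) :
    FreeAlgebra K (Fin (n + 1)) →ₐ[K] FreeAlgebra K (Fin (n + 1)) :=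
  FreeAlgebra.lift K fun j =>
    Fin.lastCases (ι K (Fin.last n))
      (fun j' => ∑ i : Fin n, sandwich K n (A i j') (ι K i.castSucc)) j

section Aux

variable (K : Type*) [Field K] (n : ℕ)

local notation "R" => MvPolynomial (Fin 2) K
local notation "F" => FreeAlgebra K (Fin (n + 1))
local notation "zz" => ι K (Fin.last n)

lemma sandwich_monomial (m : Fin 2 →₀ ℕ) (c : K) (w : F) :
    sandwich K n (MvPolynomial.monomial m c) w = c • (zz ^ m 0 * w * zz ^ m 1) := by
  unfold sandwich
  rw [← MvPolynomial.single_eq_monomial, AddMonoidAlgebra.coeff_single, Finsupp.sum_single_index]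
  simp

lemma sandwich_add (p q : R) (w : F) :
    sandwich K n (p + q) w = sandwich K n p w + sandwich K n q w := by
  unfold sandwich
  rw [show AddMonoidAlgebra.coeff (p + q) = AddMonoidAlgebra.coeff p + AddMonoidAlgebra.coeff q from rfl,
    Finsupp.sum_add_index] <;> intros <;> simp [add_smul]

lemma sandwich_zero (w : F) : sandwich K n 0 w = 0 := by
  unfold sandwich; simp

lemma sandwich_smul (c : K) (p : R) (w : F) :
    sandwich K n (c • p) w = c • sandwich K n p w := by
  unfold sandwich
  rw [show AddMonoidAlgebra.coeff (c • p) = c • AddMonoidAlgebra.coeff p from rfl,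
    Finsupp.sum_smul_index (by intro m; simp), Finsupp.smul_sum]
  simp [mul_smul]

noncomputable def sandwichL (w : F) : R →ₗ[K] F where
  toFun p := sandwich K n p w
  map_add' p q := sandwich_add K n p q w
  map_smul' c p := sandwich_smul K n c p w

lemma sandwichL_apply (p : R) (w : F) : sandwichL K n w p = sandwich K n p w := rfl

lemma sandwich_monomial_mul (m : Fin 2 →₀ ℕ) (c : K) (q : R) (w : F) :
    sandwich K n (MvPolynomial.monomial m c * q) w
      = c • (zz ^ m 0 * sandwich K n q w * zz ^ m 1) := by
  induction q using MvPolynomial.induction_on' with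
  | monomial m' c' =>
      rw [MvPolynomial.monomial_mul, sandwich_monomial, sandwich_monomial]
      rw [Finsupp.add_apply, Finsupp.add_apply, pow_add, add_comm (m 1) (m' 1), pow_add]
      rw [mul_smul_comm, smul_mul_assoc, smul_smul]
      ring_nf
      rw [mul_comm c c']
      congr 1
      noncomm_ring
  | add p q hp hq =>
      rw [mul_add, sandwich_add, hp, hq, sandwich_add, mul_add, add_mul, smul_add]

lemma sandwich_mul (p q : R) (w : F) :
    sandwich K n (p * q) w = sandwich K n p (sandwich K n q w) := by
  induction p using MvPolynomial.induction_on' with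
  | monomial m c => rw [sandwich_monomial_mul, sandwich_monomial]
  | add p p' hp hp' => rw [add_mul, sandwich_add, hp, hp', sandwich_add]

lemma sandwich_sum {ι' : Type*} (s : Finset ι') (p : R) (w : ι' → F) :
    sandwich K n p (∑ i ∈ s, w i) = ∑ i ∈ s, sandwich K n p (w i) := by
  unfold sandwich
  rw [Finsupp.sum]
  simp only [Finset.mul_sum, Finset.sum_mul, Finset.smul_sum]
  rw [Finset.sum_comm]
  rfl

lemma endo_z (A : Matrix (Fin n) (Fin n) R) : linearKzEndo K n A zz = zz := by
  simp [linearKzEndo]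

lemma endo_x (A : Matrix (Fin n) (Fin n) R) (j : Fin n) :
    linearKzEndo K n A (ι K j.castSucc) = ∑ i : Fin n, sandwich K n (A i j) (ι K i.castSucc) := by
  simp [linearKzEndo]

lemma algHom_sandwich {S : Type*} [Semiring S] [Algebra K S] (φ : F →ₐ[K] S) (p : R) (w : F) :
    φ (sandwich K n p w) = (AddMonoidAlgebra.coeff p).sum fun m c => c • (φ zz ^ m 0 * φ w * φ zz ^ m 1) := by
  unfold sandwich
  rw [map_finsuppSum]
  simp [map_smul, map_mul, map_pow]

lemma endo_sandwich (A : Matrix (Fin n) (Fin n) R) (p : R) (i : Fin n) :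
    linearKzEndo K n A (sandwich K n p (ι K i.castSucc))
      = ∑ k : Fin n, sandwich K n (p * A k i) (ι K k.castSucc) := by
  rw [algHom_sandwich, endo_z, endo_x]
  have : ((AddMonoidAlgebra.coeff p).sum fun m c => c • (zz ^ m 0 * (∑ k : Fin n, sandwich K n (A k i) (ι K k.castSucc)) * zz ^ m 1))
      = sandwich K n p (∑ k : Fin n, sandwich K n (A k i) (ι K k.castSucc)) := rfl
  rw [this, sandwich_sum]
  exact Finset.sum_congr rfl fun k _ => (sandwich_mul K n p (A k i) _).symm

lemma endo_comp (A B : Matrix (Fin n) (Fin n) R) :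
    (linearKzEndo K n A).comp (linearKzEndo K n B) = linearKzEndo K n (A * B) := by
  apply FreeAlgebra.hom_ext
  funext j
  induction j using Fin.lastCases with
  | last => simp [endo_z]
  | cast j' =>
      simp only [Function.comp_apply, AlgHom.coe_comp, endo_x, map_sum, endo_sandwich]
      rw [Finset.sum_comm]
      refine Finset.sum_congr rfl fun k _ => ?_
      rw [Matrix.mul_apply]
      rw [show sandwich K n (∑ i : Fin n, A k i * B i j') (ι K k.castSucc)
          = ∑ i : Fin n, sandwich K n (A k i * B i j') (ι K k.castSucc) from
        map_sum (sandwichL K n (ι K k.castSucc)) _ Finset.univ]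
      exact Finset.sum_congr rfl fun i _ =>
        congrArg (fun p => sandwich K n p (ι K k.castSucc)) (mul_comm _ _)

lemma sandwich_one (w : F) : sandwich K n 1 w = w := by
  have : (1 : R) = MvPolynomial.monomial 0 1 := by simp
  rw [this, sandwich_monomial]
  simp

lemma endo_one : linearKzEndo K n 1 = AlgHom.id K F := by
  apply FreeAlgebra.hom_ext
  funext j
  induction j using Fin.lastCases with
  | last => simp [endo_z]
  | cast j' =>
      simp only [Function.comp_apply, endo_x, AlgHom.coe_id, id_eq, Matrix.one_apply]
      rw [Finset.sum_congr rfl (fun i _ => ?_), Finset.sum_ite_eq' Finset.univ j'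
        (fun i => sandwich K n 1 (ι K i.castSucc))]
      · simp [sandwich_one]
      · rw [apply_ite (fun p => sandwich K n p (ι K i.castSucc)), sandwich_zero]

/-- Diagonal vector for the representation `ψ`. -/
noncomputable def dvec : Fin (n + 1) → R := fun r => if r = 0 then MvPolynomial.X 0 else MvPolynomial.X 1

/-- The representation `ψ : F → M_{n+1}(R)` with `z ↦ diag(X0,X1,…,X1)`,
`x_i ↦ E_{0, i+1}`. -/
noncomputable def psi : F →ₐ[K] Matrix (Fin (n + 1)) (Fin (n + 1)) R :=
  FreeAlgebra.lift K fun j =>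
    Fin.lastCases (Matrix.diagonal (dvec K n))
      (fun j' => Matrix.single 0 j'.succ 1) j

lemma psi_z : psi K n zz = Matrix.diagonal (dvec K n) := by simp [psi]

lemma psi_x (i : Fin n) : psi K n (ι K i.castSucc) = Matrix.single 0 i.succ 1 := by
  simp [psi]

lemma entry_lemma (φ : F →ₐ[K] Matrix (Fin (n + 1)) (Fin (n + 1)) R)
    (hz : φ zz = Matrix.diagonal (dvec K n)) (p : R) (w : F) (k : Fin n) :
    (φ (sandwich K n p w)) 0 k.succ = p * (φ w) 0 k.succ := by
  induction p using MvPolynomial.induction_on' with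
  | monomial m c =>
      rw [sandwich_monomial, map_smul, map_mul, map_mul, map_pow, map_pow, hz,
        Matrix.smul_apply, Matrix.diagonal_pow, Matrix.diagonal_pow, mul_assoc,
        Matrix.diagonal_mul, Matrix.mul_diagonal, MvPolynomial.monomial_eq,
        Finsupp.prod_fintype _ _ (by simp), Fin.prod_univ_two]
      rw [Pi.pow_apply, Pi.pow_apply]
      simp only [dvec, if_true, eq_self_iff_true, if_neg (Fin.succ_ne_zero k)]
      rw [MvPolynomial.smul_eq_C_mul]
      ring
  | add p q hp hq => rw [sandwich_add, map_add, Matrix.add_apply, hp, hq, add_mul]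

lemma entry_endo (A : Matrix (Fin n) (Fin n) R) (j k : Fin n) :
    (psi K n (linearKzEndo K n A (ι K j.castSucc))) 0 k.succ = A k j := by
  rw [endo_x, map_sum, Matrix.sum_apply]
  rw [Finset.sum_congr rfl (fun i _ => entry_lemma K n (psi K n) (psi_z K n) (A i j) _ k)]
  rw [Finset.sum_eq_single k]
  · simp [psi_x, Matrix.single]
  · intro i _ h
    simp [psi_x, Matrix.single, Fin.succ_inj, h]
  · simp

lemma endo_inj : Function.Injective (linearKzEndo K n) := by
  intro A A' h
  ext k j
  rw [← entry_endo K n A j k, ← entry_endo K n A' j k, h]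

lemma exists_left_inv (e : F ≃ₐ[K] F) (A : Matrix (Fin n) (Fin n) R)
    (hA : (e : F →ₐ[K] F) = linearKzEndo K n A) :
    ∃ B : Matrix (Fin n) (Fin n) R, B * A = 1 := by
  have happ : ∀ w, e w = linearKzEndo K n A w := fun w => by
    rw [← hA]; rfl
  have hez : e zz = zz := by rw [happ, endo_z]
  have hsz : e.symm zz = zz := by
    conv_lhs => rw [← hez]
    exact e.symm_apply_apply zz
  set χ : F →ₐ[K] Matrix (Fin (n + 1)) (Fin (n + 1)) R := (psi K n).comp e.symm.toAlgHom with hχ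
  have hχz : χ zz = Matrix.diagonal (dvec K n) := by
    show psi K n (e.symm zz) = _
    rw [hsz, psi_z]
  refine ⟨Matrix.of fun k i => (χ (ι K i.castSucc)) 0 k.succ, ?_⟩
  apply Matrix.ext
  intro k j
  rw [Matrix.mul_apply]
  have h1 : χ (e (ι K j.castSucc)) = psi K n (ι K j.castSucc) := by
    show psi K n (e.symm (e _)) = _
    rw [e.symm_apply_apply]
  rw [happ, endo_x, map_sum] at h1
  have h2 : (∑ i : Fin n, χ (sandwich K n (A i j) (ι K i.castSucc))) 0 k.succ
      = (psi K n (ι K j.castSucc)) 0 k.succ := by rw [h1]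
  rw [Matrix.sum_apply,
    Finset.sum_congr rfl (fun i _ => entry_lemma K n χ hχz (A i j) _ k), psi_x] at h2
  calc ∑ i : Fin n, (χ (ι K i.castSucc)) 0 k.succ * A i j
      = ∑ i : Fin n, A i j * (χ (ι K i.castSucc)) 0 k.succ :=
        Finset.sum_congr rfl fun i _ => mul_comm _ _
    _ = (Matrix.single (0 : Fin (n+1)) j.succ (1 : R)) 0 k.succ := h2
    _ = (1 : Matrix (Fin n) (Fin n) R) k j := by
        by_cases h : k = j
        · subst h; simp [Matrix.single]
        · have : j.succ ≠ k.succ := fun hh => h (Fin.succ_inj.mp hh).symm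
          simp [Matrix.single, Matrix.one_apply, h, this]

noncomputable def toEquiv (g : Matrix.GeneralLinearGroup (Fin n) R) : F ≃ₐ[K] F :=
  AlgEquiv.ofAlgHom (linearKzEndo K n ↑g) (linearKzEndo K n ↑g⁻¹)
    (by rw [endo_comp, Units.mul_inv, endo_one])
    (by rw [endo_comp, Units.inv_mul, endo_one])

lemma toEquiv_apply (g : Matrix.GeneralLinearGroup (Fin n) R) (w : F) :
    toEquiv K n g w = linearKzEndo K n (↑g) w := rfl

lemma toEquiv_coe (g : Matrix.GeneralLinearGroup (Fin n) R) :
    (toEquiv K n g : F →ₐ[K] F) = linearKzEndo K n ↑g :=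
  AlgHom.ext fun _ => rfl

noncomputable def PhiHom : Matrix.GeneralLinearGroup (Fin n) R →* (F ≃ₐ[K] F) where
  toFun := toEquiv K n
  map_one' := by
    apply AlgEquiv.ext; intro w
    rw [toEquiv_apply, Units.val_one, endo_one]
    rfl
  map_mul' g h := by
    apply AlgEquiv.ext; intro w
    rw [AlgEquiv.mul_apply, toEquiv_apply, toEquiv_apply, toEquiv_apply,
      Units.val_mul, ← endo_comp]
    rfl

lemma PhiHom_inj : Function.Injective (PhiHom K n) := by
  intro g h hgh
  have h2 : linearKzEndo K n ↑g = linearKzEndo K n ↑h :=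
    AlgHom.ext fun w => by
      have := DFunLike.congr_fun hgh w
      rwa [show PhiHom K n g = toEquiv K n g from rfl,
        show PhiHom K n h = toEquiv K n h from rfl, toEquiv_apply, toEquiv_apply] at this
  exact Units.ext (endo_inj K n h2)

end Aux

/-- The map sending a linear `K[z]`-automorphism of `K⟨x₁,…,x_n,z⟩` to its Jacobian matrix
is a group isomorphism from the group `G` of linear `K[z]`-automorphisms onto
`GLₙ(K[z₁,z₂])`. -/
theorem linearKzAut_iso_GL (K : Type*) [Field K] (n : ℕ) :
    ∃ (G : Subgroup (FreeAlgebra K (Fin (n + 1)) ≃ₐ[K] FreeAlgebra K (Fin (n + 1))))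
      (Φ : G ≃* Matrix.GeneralLinearGroup (Fin n) (MvPolynomial (Fin 2) K)),
      (∀ e : FreeAlgebra K (Fin (n + 1)) ≃ₐ[K] FreeAlgebra K (Fin (n + 1)),
        e ∈ G ↔ ∃ A : Matrix (Fin n) (Fin n) (MvPolynomial (Fin 2) K),
          (e : FreeAlgebra K (Fin (n + 1)) →ₐ[K] FreeAlgebra K (Fin (n + 1))) =
            linearKzEndo K n A) ∧
      ∀ (e : G) (A : Matrix (Fin n) (Fin n) (MvPolynomial (Fin 2) K)),
        ((e : FreeAlgebra K (Fin (n + 1)) ≃ₐ[K] FreeAlgebra K (Fin (n + 1))) :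
            FreeAlgebra K (Fin (n + 1)) →ₐ[K] FreeAlgebra K (Fin (n + 1))) =
          linearKzEndo K n A →
        (Φ e : Matrix (Fin n) (Fin n) (MvPolynomial (Fin 2) K)) = A := by
  refine ⟨(PhiHom K n).range, (MonoidHom.ofInjective (PhiHom_inj K n)).symm, ?_, ?_⟩
  · intro e
    constructor
    · rintro ⟨g, rfl⟩
      exact ⟨↑g, toEquiv_coe K n g⟩
    · rintro ⟨A, hA⟩
      obtain ⟨B, hBA⟩ := exists_left_inv K n e A hA
      have hAB : A * B = 1 := mul_eq_one_comm.mpr hBA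
      refine ⟨⟨A, B, hAB, hBA⟩, ?_⟩
      apply AlgEquiv.ext; intro w
      show linearKzEndo K n A w = e w
      exact (DFunLike.congr_fun hA w).symm
  · intro e A hA
    set g := (MonoidHom.ofInjective (PhiHom_inj K n)).symm e with hg
    have h1 : PhiHom K n g = ↑e := by
      have h0 := (MonoidHom.ofInjective (PhiHom_inj K n)).apply_symm_apply e
      have h2 := congrArg Subtype.val h0
      rwa [MonoidHom.ofInjective_apply] at h2
    have h3 : linearKzEndo K n ↑g = linearKzEndo K n A := by
      rw [← toEquiv_coe K n g, show toEquiv K n g = PhiHom K n g from rfl, h1, hA]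
    exact endo_inj K n h3
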